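/- Let G be a simplicial group such that every element of G_2 is a product of degenerate elements (G_2 = D_2). Let N_2 be the normal subgroup of G_2 generated by all F_{(0)(1)}(x,y) = [s_0 x, s_1 y]·[s_1 y, s_1 x] with x, y ∈ NG_1. Then ∂_2(NG_2) = ∂_2(N_2), where ∂_2 : NG_2 → NG_1 is the restriction of d_2. -/

import Mathlib

/-- A simplicial group: groups `G n` with face maps `d n i : G (n+1) →* G n`
and degeneracies `s n i : G n →* G (n+1)` satisfying the simplicial identities
(asserted in the meaningful index ranges). -/
structure SGrp where
  G : ℕ → Type
  grp : ∀ n, Group (G n)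
  d : (n : ℕ) → ℕ → (G (n+1) →* G n)
  s : (n : ℕ) → ℕ → (G n →* G (n+1))
  dd : ∀ n i j, i < j → j ≤ n + 2 → ∀ x,
    d n i (d (n+1) j x) = d n (j-1) (d (n+1) i x)
  ds_lt : ∀ n i j, i < j → j ≤ n + 1 → ∀ x,
    d (n+1) i (s (n+1) j x) = s n (j-1) (d n i x)
  ds_eq : ∀ n j, j ≤ n → ∀ x, d n j (s n j x) = x
  ds_succ : ∀ n j, j ≤ n → ∀ x, d n (j+1) (s n j x) = x
  ds_gt : ∀ n i j, j + 1 < i → i ≤ n + 2 → ∀ x,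
    d (n+1) i (s (n+1) j x) = s n j (d n (i-1) x)
  ss : ∀ n i j, i ≤ j → j ≤ n → ∀ x,
    s (n+1) i (s n j x) = s (n+1) (j+1) (s n i x)

attribute [instance] SGrp.grp

/-- Moore complex: `NG 0 = G 0`, `NG (n+1) = ⋂_{i ≤ n} ker (d_i)`. -/
def SGrp.NG (X : SGrp) : (n : ℕ) → Subgroup (X.G n)
  | 0 => ⊤
  | (n+1) => ⨅ i ∈ Finset.range (n+1), (X.d n i).ker

/-- Transport along an equality of dimensions. -/
def SGrp.castHom (X : SGrp) {a b : ℕ} (h : a = b) : X.G a →* X.G b where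
  toFun x := h ▸ x
  map_one' := by subst h; rfl
  map_mul' x y := by subst h; rfl

/-- Composite degeneracy `s_α = s_{i_l} ⋯ s_{i_1}` for `α = [i_l, …, i_1]`
(head applied last). -/
def SGrp.sComp (X : SGrp) : (m : ℕ) → (α : List ℕ) → (X.G m →* X.G (m + α.length))
  | _, [] => MonoidHom.id _
  | m, i :: rest => (X.s (m + rest.length) i).comp (X.sComp m rest)

/-- `s_α : G_{n-#α} →* G_n` for `α ∈ S(n)` (the trivial hom if lengths mismatch). -/
def SGrp.sMapN (X : SGrp) (n : ℕ) (α : List ℕ) : X.G (n - α.length) →* X.G n :=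
  if h : n - α.length + α.length = n then
    (X.castHom h).comp (X.sComp (n - α.length) α) else 1

/-- `p_j(z) = z ⬝ (s_j d_j z)⁻¹` on `G (n+1)`. -/
def SGrp.p (X : SGrp) (n j : ℕ) (z : X.G (n+1)) : X.G (n+1) :=
  z * (X.s n j (X.d n j z))⁻¹

/-- `pComp n j = p_j ∘ ⋯ ∘ p_0` on `G (n+1)`. -/
def SGrp.pComp (X : SGrp) (n : ℕ) : ℕ → X.G (n+1) → X.G (n+1)
  | 0 => X.p n 0
  | (j+1) => fun z => X.p n (j+1) (X.pComp n j z)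

/-- `pComp1 n l = p_l ∘ ⋯ ∘ p_1` on `G (n+1)` (identity for `l = 0`). -/
def SGrp.pComp1 (X : SGrp) (n : ℕ) : ℕ → X.G (n+1) → X.G (n+1)
  | 0 => id
  | (j+1) => fun z => X.p n (j+1) (X.pComp1 n j z)

/-- The ordering of `S(n)` from the paper: `α < β` iff comparing from the
smallest indices (the reversed lists), either the first difference has the
index of `α` larger, or `α`'s indices (from the small end) form a proper
prefix of `β`'s. -/
def Slt (α β : List ℕ) : Prop := List.Lex (· > ·) α.reverse β.reverse

/-- `α` represents a nonidentity element of `S(N)`: a nonempty strictly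
decreasing tuple of indices `< N`. -/
def SIdx (N : ℕ) (α : List ℕ) : Prop :=
  α ≠ [] ∧ α.Chain' (· > ·) ∧ α.length ≤ N ∧ ∀ i ∈ α, i < N

namespace Stmt11Aux

variable (X : SGrp)

lemma d10_s10 (a : X.G 1) : X.d 1 0 (X.s 1 0 a) = a := X.ds_eq 1 0 (by omega) a
lemma d11_s10 (a : X.G 1) : X.d 1 1 (X.s 1 0 a) = a := X.ds_succ 1 0 (by omega) a
lemma d12_s10 (a : X.G 1) : X.d 1 2 (X.s 1 0 a) = X.s 0 0 (X.d 0 1 a) :=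
  X.ds_gt 0 2 0 (by omega) (by omega) a
lemma d10_s11 (b : X.G 1) : X.d 1 0 (X.s 1 1 b) = X.s 0 0 (X.d 0 0 b) :=
  X.ds_lt 0 0 1 (by omega) (by omega) b
lemma d11_s11 (b : X.G 1) : X.d 1 1 (X.s 1 1 b) = b := X.ds_eq 1 1 (by omega) b
lemma d12_s11 (b : X.G 1) : X.d 1 2 (X.s 1 1 b) = b := X.ds_succ 1 1 (by omega) b
lemma d00_s00 (z : X.G 0) : X.d 0 0 (X.s 0 0 z) = z := X.ds_eq 0 0 (by omega) z
lemma d01_s00 (z : X.G 0) : X.d 0 1 (X.s 0 0 z) = z := X.ds_succ 0 0 (by omega) z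
lemma d00_d11 (g : X.G 2) : X.d 0 0 (X.d 1 1 g) = X.d 0 0 (X.d 1 0 g) :=
  X.dd 0 0 1 (by omega) (by omega) g

lemma mem_NG2 (z : X.G 2) : z ∈ X.NG 2 ↔ X.d 1 0 z = 1 ∧ X.d 1 1 z = 1 := by
  have h : X.NG 2 = ⨅ i ∈ Finset.range 2, (X.d 1 i).ker := rfl
  rw [h]
  simp only [Subgroup.mem_iInf, Finset.mem_range, MonoidHom.mem_ker]
  constructor
  · intro hz; exact ⟨hz 0 (by omega), hz 1 (by omega)⟩
  · rintro ⟨h0, h1⟩ i hi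
    interval_cases i
    · exact h0
    · exact h1

lemma NG2_normal : (X.NG 2).Normal := by
  constructor
  intro z hz g
  rw [mem_NG2] at hz ⊢
  simp [map_mul, map_inv, hz.1, hz.2]

lemma phi_mul (M : Subgroup (X.G 1)) [hMn : M.Normal]
    (hcomm : ∀ a b : X.G 1, X.d 0 0 a = 1 → X.d 0 1 b = 1 → b * a * b⁻¹ * a⁻¹ ∈ M)
    (u₁ v₁ u₂ v₂ : X.G 1) (h₂ : X.d 0 0 u₂ = X.d 0 0 v₂) :
    QuotientGroup.mk' M (v₁ * v₂ * (u₁ * u₂)⁻¹ * X.s 0 0 (X.d 0 1 (u₁ * u₂)))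
      = QuotientGroup.mk' M (v₁ * u₁⁻¹ * X.s 0 0 (X.d 0 1 u₁))
        * QuotientGroup.mk' M (v₂ * u₂⁻¹ * X.s 0 0 (X.d 0 1 u₂)) := by
  have hβ : X.d 0 1 (u₁⁻¹ * X.s 0 0 (X.d 0 1 u₁)) = 1 := by
    rw [map_mul, map_inv, d01_s00]; group
  have hγ : X.d 0 0 ((v₂ * u₂⁻¹)⁻¹) = 1 := by
    rw [map_inv, map_mul, map_inv, ← h₂]; group
  have hw : (u₁⁻¹ * X.s 0 0 (X.d 0 1 u₁))⁻¹ * (v₂ * u₂⁻¹)⁻¹ *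
      (u₁⁻¹ * X.s 0 0 (X.d 0 1 u₁)) * (v₂ * u₂⁻¹) ∈ M := by
    have h := hcomm ((v₂ * u₂⁻¹)⁻¹) ((u₁⁻¹ * X.s 0 0 (X.d 0 1 u₁))⁻¹) hγ
      (by rw [map_inv, hβ]; group)
    simpa using h
  have hz := hMn.conj_mem _ hw ((X.s 0 0 (X.d 0 1 u₂))⁻¹)
  rw [← map_mul, QuotientGroup.mk'_eq_mk']
  exact ⟨_, hz, by simp only [map_mul]; group⟩

lemma phi_inv (M : Subgroup (X.G 1)) [hMn : M.Normal]
    (hcomm : ∀ a b : X.G 1, X.d 0 0 a = 1 → X.d 0 1 b = 1 → b * a * b⁻¹ * a⁻¹ ∈ M)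
    (u v : X.G 1) (h : X.d 0 0 u = X.d 0 0 v) :
    QuotientGroup.mk' M (v⁻¹ * (u⁻¹)⁻¹ * X.s 0 0 (X.d 0 1 u⁻¹))
      = (QuotientGroup.mk' M (v * u⁻¹ * X.s 0 0 (X.d 0 1 u)))⁻¹ := by
  have h2 : X.d 0 0 u⁻¹ = X.d 0 0 v⁻¹ := by rw [map_inv, map_inv, h]
  have hm := phi_mul X M hcomm u v u⁻¹ v⁻¹ h2
  have h1 : QuotientGroup.mk' M (v * v⁻¹ * (u * u⁻¹)⁻¹ * X.s 0 0 (X.d 0 1 (u * u⁻¹))) = 1 := by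
    simp
  exact eq_inv_of_mul_eq_one_right (hm.symm.trans h1)

end Stmt11Aux

open scoped commutatorElement

open Stmt11Aux in
/-- Brown–Loday: if `G_2 = D_2` is generated by the degenerate
elements, then `∂₂(NG_2) = ∂₂(N_2)` where `N_2` is the normal closure of the
elements `F_{(0)(1)}(x,y) = [s₀x, s₁y]·[s₁y, s₁x]`, `x, y ∈ NG_1`. -/
theorem stmt11 (X : SGrp)
    (hD : Subgroup.closure (Set.range (X.s 1 0) ∪ Set.range (X.s 1 1)) =
      (⊤ : Subgroup (X.G 2))) :
    Subgroup.map (X.d 1 2) (X.NG 2) =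
      Subgroup.map (X.d 1 2)
        (Subgroup.normalClosure
          {g : X.G 2 | ∃ x y : X.G 1, X.d 0 0 x = 1 ∧ X.d 0 0 y = 1 ∧
            g = ⁅X.s 1 0 x, X.s 1 1 y⁆ * ⁅X.s 1 1 y, X.s 1 1 x⁆}) := by
  classical
  set M : Subgroup (X.G 1) := Subgroup.map (X.d 1 2)
        (Subgroup.normalClosure
          {g : X.G 2 | ∃ x y : X.G 1, X.d 0 0 x = 1 ∧ X.d 0 0 y = 1 ∧
            g = ⁅X.s 1 0 x, X.s 1 1 y⁆ * ⁅X.s 1 1 y, X.s 1 1 x⁆}) with hM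
  haveI hMn : M.Normal := by
    rw [hM]
    exact Subgroup.Normal.map inferInstance _ (fun w => ⟨X.s 1 1 w, d12_s11 X w⟩)
  have hcomm : ∀ a b : X.G 1, X.d 0 0 a = 1 → X.d 0 1 b = 1 → b * a * b⁻¹ * a⁻¹ ∈ M := by
    intro a b ha hb
    have hx : X.d 0 0 (b⁻¹ * X.s 0 0 (X.d 0 0 b)) = 1 := by
      rw [map_mul, map_inv, d00_s00]; group
    have hy : X.d 0 0 ((b⁻¹ * X.s 0 0 (X.d 0 0 b))⁻¹ * a * (b⁻¹ * X.s 0 0 (X.d 0 0 b))) = 1 := by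
      rw [map_mul, map_mul, map_inv, hx, ha]; group
    have hmem : ⁅X.s 1 0 (b⁻¹ * X.s 0 0 (X.d 0 0 b)),
          X.s 1 1 ((b⁻¹ * X.s 0 0 (X.d 0 0 b))⁻¹ * a * (b⁻¹ * X.s 0 0 (X.d 0 0 b)))⁆ *
        ⁅X.s 1 1 ((b⁻¹ * X.s 0 0 (X.d 0 0 b))⁻¹ * a * (b⁻¹ * X.s 0 0 (X.d 0 0 b))),
          X.s 1 1 (b⁻¹ * X.s 0 0 (X.d 0 0 b))⁆ ∈
        Subgroup.normalClosure
          {g : X.G 2 | ∃ x y : X.G 1, X.d 0 0 x = 1 ∧ X.d 0 0 y = 1 ∧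
            g = ⁅X.s 1 0 x, X.s 1 1 y⁆ * ⁅X.s 1 1 y, X.s 1 1 x⁆} :=
      Subgroup.subset_normalClosure ⟨_, _, hx, hy, rfl⟩
    rw [hM, Subgroup.mem_map]
    refine ⟨_, hmem, ?_⟩
    have hd01x : X.d 0 1 (b⁻¹ * X.s 0 0 (X.d 0 0 b)) = X.d 0 0 b := by
      rw [map_mul, map_inv, hb, d01_s00]; group
    have hsx : X.s 0 0 (X.d 0 1 (b⁻¹ * X.s 0 0 (X.d 0 0 b)))
        = b * (b⁻¹ * X.s 0 0 (X.d 0 0 b)) := by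
      rw [hd01x]; group
    rw [map_mul, map_commutatorElement, map_commutatorElement, d12_s10, d12_s11, d12_s11, hsx]
    simp only [commutatorElement_def]
    group
  have key : ∀ g : X.G 2, QuotientGroup.mk' M (X.d 1 2 g)
      = QuotientGroup.mk' M
          (X.d 1 1 g * (X.d 1 0 g)⁻¹ * X.s 0 0 (X.d 0 1 (X.d 1 0 g))) := by
    intro g
    have hg : g ∈ Subgroup.closure (Set.range (X.s 1 0) ∪ Set.range (X.s 1 1)) := by
      rw [hD]; exact Subgroup.mem_top g
    refine Subgroup.closure_induction ?_ ?_ ?_ ?_ hg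
    · rintro z (⟨a, rfl⟩ | ⟨b, rfl⟩)
      · rw [d12_s10, d10_s10, d11_s10]
        congr 1; group
      · rw [d12_s11, d10_s11, d11_s11, d01_s00]
        congr 1; group
    · simp
    · intro g h _ _ ihg ihh
      rw [map_mul (X.d 1 2), map_mul (QuotientGroup.mk' M), ihg, ihh, map_mul (X.d 1 0), map_mul (X.d 1 1)]
      exact (phi_mul X M hcomm _ _ _ _ ((d00_d11 X h).symm)).symm
    · intro g _ ih
      rw [map_inv (X.d 1 2), map_inv (QuotientGroup.mk' M), ih, map_inv (X.d 1 0), map_inv (X.d 1 1)]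
      exact (phi_inv X M hcomm _ _ ((d00_d11 X g).symm)).symm
  apply le_antisymm
  · intro w hw
    obtain ⟨g, hg, rfl⟩ := Subgroup.mem_map.mp hw
    rw [mem_NG2] at hg
    have h := key g
    rw [hg.1, hg.2] at h
    simp only [map_one, mul_one, one_mul, inv_one] at h
    have hker : X.d 1 2 g ∈ (QuotientGroup.mk' M).ker := h
    rwa [QuotientGroup.ker_mk'] at hker
  · rw [hM]
    apply Subgroup.map_mono
    haveI := NG2_normal X
    apply Subgroup.normalClosure_le_normal
    rintro g ⟨x, y, hx, hy, rfl⟩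
    rw [SetLike.mem_coe, mem_NG2]
    constructor
    · rw [map_mul, map_commutatorElement, map_commutatorElement, d10_s10, d10_s11, d10_s11,
        hx, hy]
      simp
    · rw [map_mul, map_commutatorElement, map_commutatorElement, d11_s10, d11_s11, d11_s11]
      simp only [commutatorElement_def]
      group
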